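/- The dilatable global entropy is nonnegative on the sequence-form polytope and its minimum over Q equals 0: φ̃(x) ≥ 0 for every x ∈ Q, and φ̃(u) = 0 at the uniform sequence-form strategy u ∈ Q defined recursively by u_∅ = 1 and u_{(j,a)} = u_{p_j}/|A_j| for every j ∈ J and a ∈ A_j. -/

import Mathlib

open Finset

lemma jensen_aux {α : Type} [Fintype α] [Nonempty α] (f : α → ℝ) (hf : ∀ a, 0 ≤ f a) :
    (∑ a, f a) * Real.log (∑ a, f a) ≤
      (∑ a, f a * Real.log (f a)) + (∑ a, f a) * Real.log (Fintype.card α) := by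
  set n : ℕ := Fintype.card α with hn
  have hnpos : (0:ℝ) < n := by exact_mod_cast Fintype.card_pos
  set S : ℝ := ∑ a, f a with hS
  have hSnn : 0 ≤ S := Finset.sum_nonneg fun a _ => hf a
  rcases eq_or_lt_of_le hSnn with h0 | hSpos
  · have hz : ∀ a ∈ (univ : Finset α), f a = 0 :=
      (Finset.sum_eq_zero_iff_of_nonneg (fun a _ => hf a)).1 h0.symm
    have : ∑ a, f a * Real.log (f a) = 0 :=
      Finset.sum_eq_zero fun a ha => by rw [hz a ha]; ring
    rw [← h0, this]; simp
  · have hj := (Real.convexOn_mul_log).map_sum_le (t := (univ : Finset α))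
      (w := fun _ => (n:ℝ)⁻¹) (p := f)
      (fun i _ => by positivity)
      (by simp [Finset.card_univ, ← hn])
      (fun i _ => hf i)
    simp only [smul_eq_mul] at hj
    have hsum : ∑ i : α, (n:ℝ)⁻¹ * f i = S / n := by
      rw [← Finset.mul_sum, ← hS]; ring
    rw [hsum] at hj
    have hlog : Real.log (S / n) = Real.log S - Real.log n :=
      Real.log_div (ne_of_gt hSpos) (ne_of_gt hnpos)
    have hj2 : S / n * (Real.log S - Real.log n) ≤ (n:ℝ)⁻¹ * ∑ a, f a * Real.log (f a) := by
      rw [hlog] at hj; rw [Finset.mul_sum]; exact hj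
    have := mul_le_mul_of_nonneg_left hj2 (le_of_lt hnpos)
    have hne : (n:ℝ) ≠ 0 := ne_of_gt hnpos
    rw [show (n:ℝ) * (S / n * (Real.log S - Real.log n)) = S * Real.log S - S * Real.log n by
        field_simp,
      show (n:ℝ) * ((n:ℝ)⁻¹ * ∑ a, f a * Real.log (f a)) = ∑ a, f a * Real.log (f a) by
        field_simp] at this
    linarith

/-- The dilatable global entropy is nonnegative on the sequence-form polytope `Q`, and its
minimum over `Q` equals `0`, attained at the uniform sequence-form strategy `u`. -/
theorem dge_nonneg_and_min_zero
    {J : Type} [Fintype J] [DecidableEq J]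
    {A : J → Type} [∀ j, Fintype (A j)] [∀ j, DecidableEq (A j)] [∀ j, Nonempty (A j)]
    (p : J → Option ((j : J) × A j))
    (hwf : WellFounded (fun j' j : J => ∃ a : A j, p j' = some ⟨j, a⟩))
    (γ : J → ℝ) (γ0 : ℝ)
    (hγ : ∀ j : J, γ j = 1 + (Finset.univ : Finset (A j)).sup' Finset.univ_nonempty
        (fun a => ∑ j' ∈ Finset.univ.filter (fun j' => p j' = some ⟨j, a⟩), γ j'))
    (hγ0 : γ0 = 1 + ∑ j ∈ Finset.univ.filter (fun j : J => p j = none), γ j)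
    (w : Option ((j : J) × A j) → ℝ)
    (hw0 : w none = γ0 - ∑ j ∈ Finset.univ.filter (fun j : J => p j = none), γ j)
    (hw : ∀ (j : J) (a : A j),
      w (some ⟨j, a⟩) = γ j - ∑ j' ∈ Finset.univ.filter (fun j' => p j' = some ⟨j, a⟩), γ j')
    (Q : Set (Option ((j : J) × A j) → ℝ))
    (hQ : Q = {x | (∀ σ, 0 ≤ x σ) ∧ x none = 1 ∧
        ∀ j : J, ∑ a : A j, x (some ⟨j, a⟩) = x (p j)})
    (φ : (Option ((j : J) × A j) → ℝ) → ℝ)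
    (hφ : φ = fun x => w none * (x none * Real.log (x none))
      + (∑ j : J, ∑ a : A j, w (some ⟨j, a⟩) * (x (some ⟨j, a⟩) * Real.log (x (some ⟨j, a⟩))))
      + (∑ j : J, γ j * (x (p j) * Real.log ((Fintype.card (A j) : ℝ)))))
    (u : Option ((j : J) × A j) → ℝ)
    (hu1 : u none = 1)
    (hurec : ∀ (j : J) (a : A j), u (some ⟨j, a⟩) = u (p j) / (Fintype.card (A j) : ℝ)) :
    (∀ x ∈ Q, 0 ≤ φ x) ∧ u ∈ Q ∧ φ u = 0 := by
  -- γ ≥ 1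
  have hγ1 : ∀ j : J, 1 ≤ γ j := by
    intro j
    refine hwf.induction (C := fun j => 1 ≤ γ j) j ?_
    intro j IH
    rw [hγ j]
    have a0 : A j := Classical.arbitrary _
    have hle : (0:ℝ) ≤ ∑ j' ∈ univ.filter (fun j' => p j' = some ⟨j, a0⟩), γ j' :=
      Finset.sum_nonneg fun j' hj' =>
        le_trans zero_le_one (IH j' ⟨a0, (Finset.mem_filter.1 hj').2⟩)
    have hs := Finset.le_sup' (b := a0)
      (f := fun a => ∑ j' ∈ univ.filter (fun j' => p j' = some ⟨j, a⟩), γ j') (Finset.mem_univ a0)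
    have : (univ : Finset (A j)).sup' Finset.univ_nonempty
        (fun a => ∑ j' ∈ univ.filter (fun j' => p j' = some ⟨j, a⟩), γ j') ≥ 0 := le_trans hle hs
    linarith
  -- u is positive
  have hwfT := hwf.transGen
  haveI : IsTrans J (Function.swap (Relation.TransGen
      (fun j' j : J => ∃ a : A j, p j' = some ⟨j, a⟩))) :=
    ⟨fun a b c h1 h2 => Relation.TransGen.trans h2 h1⟩
  haveI : IsIrrefl J (Function.swap (Relation.TransGen
      (fun j' j : J => ∃ a : A j, p j' = some ⟨j, a⟩))) :=
    ⟨fun a h => (hwfT.asymmetric a a h) h⟩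
  have hswf : WellFounded (Function.swap (Relation.TransGen
      (fun j' j : J => ∃ a : A j, p j' = some ⟨j, a⟩))) :=
    Finite.wellFounded_of_trans_of_irrefl _
  have hupos : ∀ j : J, 0 < u (p j) := by
    intro j
    refine hswf.induction (C := fun j => 0 < u (p j)) j ?_
    intro j IH
    cases hpj : p j with
    | none => rw [hu1]; norm_num
    | some s =>
      obtain ⟨j0, a⟩ := s
      have h0 : 0 < u (p j0) := IH j0 (Relation.TransGen.single ⟨a, hpj⟩)
      rw [hurec j0 a]
      have hc : (0:ℝ) < (Fintype.card (A j0) : ℝ) := by exact_mod_cast Fintype.card_pos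
      exact div_pos h0 hc
  have hunn : ∀ σ, 0 ≤ u σ := by
    intro σ
    cases σ with
    | none => rw [hu1]; norm_num
    | some s =>
      obtain ⟨j, a⟩ := s
      rw [hurec j a]
      exact div_nonneg (le_of_lt (hupos j)) (Nat.cast_nonneg _)
  have husum : ∀ j : J, ∑ a : A j, u (some ⟨j, a⟩) = u (p j) := by
    intro j
    have hc : (Fintype.card (A j) : ℝ) ≠ 0 :=
      Nat.cast_ne_zero.2 Fintype.card_ne_zero
    simp only [hurec]
    rw [Finset.sum_const, Finset.card_univ, nsmul_eq_mul]
    field_simp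
  have huQ : u ∈ Q := by rw [hQ]; exact ⟨hunn, hu1, husum⟩
  -- decomposition of φ on {x | x none = 1}
  have hdecomp : ∀ x : Option ((j : J) × A j) → ℝ, x none = 1 →
      φ x = ∑ j : J, γ j *
        ((∑ a : A j, x (some ⟨j, a⟩) * Real.log (x (some ⟨j, a⟩)))
          - x (p j) * Real.log (x (p j))
          + x (p j) * Real.log ((Fintype.card (A j) : ℝ))) := by
    intro x hx1
    have ht0 : x none * Real.log (x none) = 0 := by rw [hx1]; simp
    have hfib : (∑ σ : Option ((j : J) × A j),
            ∑ j' ∈ univ.filter (fun j' => p j' = σ), γ j' * (x σ * Real.log (x σ)))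
        = ∑ j' : J, γ j' * (x (p j') * Real.log (x (p j'))) := by
      rw [← Finset.sum_fiberwise univ p (fun j' => γ j' * (x (p j') * Real.log (x (p j'))))]
      refine Finset.sum_congr rfl fun σ _ => Finset.sum_congr rfl fun j' hj' => ?_
      rw [(Finset.mem_filter.1 hj').2]
    have hsecond : (∑ j : J, ∑ a : A j,
        (∑ j' ∈ univ.filter (fun j' => p j' = some ⟨j, a⟩), γ j') *
          (x (some ⟨j, a⟩) * Real.log (x (some ⟨j, a⟩))))
        = ∑ j' : J, γ j' * (x (p j') * Real.log (x (p j'))) := by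
      rw [← hfib]
      simp only [← Finset.sum_mul]
      rw [Fintype.sum_option, ht0, mul_zero, zero_add,
        ← Finset.univ_sigma_univ, Finset.sum_sigma]
    simp only [hφ]
    rw [ht0, mul_zero]
    simp only [hw, sub_mul, Finset.sum_sub_distrib]
    rw [hsecond]
    simp only [← Finset.mul_sum]
    simp only [mul_add, mul_sub, Finset.sum_add_distrib, Finset.sum_sub_distrib]
    ring
  refine ⟨?_, huQ, ?_⟩
  · intro x hx
    rw [hQ] at hx
    obtain ⟨hxnn, hx1, hxsum⟩ := hx
    rw [hdecomp x hx1]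
    refine Finset.sum_nonneg fun j _ => ?_
    have hb := jensen_aux (fun a => x (some ⟨j, a⟩)) (fun a => hxnn _)
    rw [hxsum j] at hb
    have hγj := hγ1 j
    have hbr : 0 ≤ (∑ a : A j, x (some ⟨j, a⟩) * Real.log (x (some ⟨j, a⟩)))
        - x (p j) * Real.log (x (p j))
        + x (p j) * Real.log ((Fintype.card (A j) : ℝ)) := by linarith
    exact mul_nonneg (by linarith) hbr
  · rw [hdecomp u hu1]
    refine Finset.sum_eq_zero fun j _ => ?_
    have hU := hupos j
    have hn : (0:ℝ) < (Fintype.card (A j) : ℝ) := by exact_mod_cast Fintype.card_pos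
    have hT : ∑ a : A j, u (some ⟨j, a⟩) * Real.log (u (some ⟨j, a⟩))
        = u (p j) * Real.log (u (p j)) - u (p j) * Real.log ((Fintype.card (A j)) : ℝ) := by
      simp only [hurec]
      rw [Finset.sum_const, Finset.card_univ, nsmul_eq_mul,
        Real.log_div (ne_of_gt hU) (ne_of_gt hn)]
      field_simp
    rw [hT]; ring
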